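/- Let n ∈ ℕ, 0 < d ≤ n, 0 < q < p < ∞, and p < r < ∞. Then there is a constant C > 0 (independent of f and E) such that for every measurable function f on ℝ^n and every set E ⊆ ℝ^n with 0 < H^d(E) < ∞, H^d(E)^{1/p − 1/q} (∫_E |f|^q dH^d)^{1/q} ≤ C (q ((r−p)/(r(p−q)))^{(r−p)/r})^{1/p} ‖f χ_E‖_{L^{p,r}(H^d)}. -/

import Mathlib

open MeasureTheory Set ENNReal

noncomputable section

/-- The axis-parallel closed cube with corner `a` and side length `l`. -/
def cubeSet (n : ℕ) (a : Fin n → ℝ) (l : ℝ) : Set (Fin n → ℝ) :=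
  {x | ∀ i, a i ≤ x i ∧ x i ≤ a i + l}

/-- The `d`-dimensional Hausdorff content of `E ⊆ ℝⁿ`, defined as the infimum of
`∑ ℓ(Q_j)^d` over all countable coverings of `E` by axis-parallel cubes. -/
def hContent (n : ℕ) (d : ℝ) (E : Set (Fin n → ℝ)) : ℝ≥0∞ :=
  ⨅ (c : ℕ → (Fin n → ℝ) × ℝ) (_ : E ⊆ ⋃ j, cubeSet n (c j).1 (c j).2),
    ∑' j, ENNReal.ofReal ((c j).2) ^ d

/-- The Choquet integral `∫ g dH^d = ∫_0^∞ H^d({x : g x > t}) dt` of a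
nonnegative (`ℝ≥0∞`-valued) function. -/
def choquetIntegral (n : ℕ) (d : ℝ) (g : (Fin n → ℝ) → ℝ≥0∞) : ℝ≥0∞ :=
  ∫⁻ t in Set.Ioi (0 : ℝ), hContent n d {x | ENNReal.ofReal t < g x}

/-- The Choquet `L^p(H^d)` norm of an `ℝ≥0∞`-valued function. -/
def choquetLpNormE (n : ℕ) (d p : ℝ) (g : (Fin n → ℝ) → ℝ≥0∞) : ℝ≥0∞ :=
  (choquetIntegral n d fun x => g x ^ p) ^ (1 / p)

/-- The Choquet `L^p(H^d)` norm of a real-valued function. -/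
def choquetLpNorm (n : ℕ) (d p : ℝ) (f : (Fin n → ℝ) → ℝ) : ℝ≥0∞ :=
  choquetLpNormE n d p fun x => ENNReal.ofReal |f x|

/-- The weak Choquet `L^p(H^d)` norm of an `ℝ≥0∞`-valued function. -/
def weakNormE (n : ℕ) (d p : ℝ) (g : (Fin n → ℝ) → ℝ≥0∞) : ℝ≥0∞ :=
  ⨆ (t : ℝ) (_ : 0 < t),
    ENNReal.ofReal t * hContent n d {x | ENNReal.ofReal t < g x} ^ (1 / p)

/-- The weak Choquet `L^p(H^d)` norm of a real-valued function. -/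
def weakChoquetLpNorm (n : ℕ) (d p : ℝ) (f : (Fin n → ℝ) → ℝ) : ℝ≥0∞ :=
  weakNormE n d p fun x => ENNReal.ofReal |f x|

/-- The Choquet integral `∫_E |f|^q dH^d` over a set `E`. -/
def choquetSetLq (n : ℕ) (d q : ℝ) (E : Set (Fin n → ℝ)) (f : (Fin n → ℝ) → ℝ) : ℝ≥0∞ :=
  choquetIntegral n d (E.indicator fun x => ENNReal.ofReal |f x| ^ q)

/-- The Choquet–Morrey `𝓜^p_q(H^d)` norm of an `ℝ≥0∞`-valued function. -/
def morreyNormE (n : ℕ) (d p q : ℝ) (g : (Fin n → ℝ) → ℝ≥0∞) : ℝ≥0∞ :=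
  ⨆ (a : Fin n → ℝ) (l : ℝ) (_ : 0 < l),
    ENNReal.ofReal (l ^ (d / p - d / q)) *
      (choquetIntegral n d ((cubeSet n a l).indicator fun x => g x ^ q)) ^ (1 / q)

/-- The Choquet–Morrey `𝓜^p_q(H^d)` norm of a real-valued function. -/
def morreyNorm (n : ℕ) (d p q : ℝ) (f : (Fin n → ℝ) → ℝ) : ℝ≥0∞ :=
  morreyNormE n d p q fun x => ENNReal.ofReal |f x|

/-- The Lorentz `L^{p,r}(H^d)` quasinorm of a real-valued function. -/
def lorentzNorm (n : ℕ) (d p r : ℝ) (f : (Fin n → ℝ) → ℝ) : ℝ≥0∞ :=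
  (∫⁻ t in Set.Ioi (0 : ℝ),
      ((ENNReal.ofReal t) ^ p * hContent n d {x | t < |f x|}) ^ (r / p) *
        (ENNReal.ofReal t)⁻¹) ^ (1 / r)

/-- The fractional maximal operator `M_α` (with values in `ℝ≥0∞`). -/
def fracMaximal (n : ℕ) (α : ℝ) (f : (Fin n → ℝ) → ℝ) (x : Fin n → ℝ) : ℝ≥0∞ :=
  ⨆ (a : Fin n → ℝ) (l : ℝ) (_ : 0 < l) (_ : x ∈ cubeSet n a l),
    ENNReal.ofReal (l ^ (α - (n : ℝ))) * ∫⁻ y in cubeSet n a l, ENNReal.ofReal |f y|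

/-- The Euclidean norm on `Fin n → ℝ`. -/
def euclNorm {n : ℕ} (x : Fin n → ℝ) : ℝ := Real.sqrt (∑ i, x i ^ 2)

/-- The fractional integral operator `I_α`. -/
def fracIntegral (n : ℕ) (α : ℝ) (f : (Fin n → ℝ) → ℝ) (x : Fin n → ℝ) : ℝ :=
  ∫ y, f y / euclNorm (x - y) ^ ((n : ℝ) - α)


/-! ### Auxiliary lemmas -/

lemma hContent_mono (n : ℕ) (d : ℝ) {E F : Set (Fin n → ℝ)} (h : E ⊆ F) :
    hContent n d E ≤ hContent n d F :=
  le_iInf₂ fun c hc => iInf₂_le c (h.trans hc)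

lemma my_lintegral_comp_rpow {c : ℝ} (hc : 0 < c) (g : ℝ → ℝ≥0∞) :
    ∫⁻ x in Set.Ioi (0:ℝ), ENNReal.ofReal (c * x ^ (c - 1)) * g (x ^ c)
      = ∫⁻ y in Set.Ioi (0:ℝ), g y := by
  have a1 : ∀ x ∈ Set.Ioi (0:ℝ), HasFDerivWithinAt (fun t : ℝ => t ^ c)
      ((1 : ℝ →L[ℝ] ℝ).smulRight (c * x ^ (c - 1))) (Set.Ioi 0) x := fun x hx =>
    ((Real.hasDerivAt_rpow_const (p := c)
      (Or.inl (Set.mem_Ioi.mp hx).ne')).hasDerivWithinAt).hasFDerivWithinAt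
  have a2 : Set.InjOn (fun x : ℝ => x ^ c) (Set.Ioi 0) :=
    StrictMonoOn.injOn fun x hx y _ hxy =>
      Real.rpow_lt_rpow (Set.mem_Ioi.mp hx).le hxy hc
  have a3 : (fun t : ℝ => t ^ c) '' Set.Ioi 0 = Set.Ioi 0 := by
    ext1 x; rw [Set.mem_image]; constructor
    · rintro ⟨y, hy, rfl⟩; exact Real.rpow_pos_of_pos hy c
    · intro hx; refine ⟨x ^ (1 / c), Real.rpow_pos_of_pos hx _, ?_⟩
      rw [← Real.rpow_mul (le_of_lt hx), one_div_mul_cancel hc.ne', Real.rpow_one]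
  have key := lintegral_image_eq_lintegral_abs_det_fderiv_mul volume measurableSet_Ioi a1 a2 g
  rw [a3] at key
  rw [key]
  refine setLIntegral_congr_fun measurableSet_Ioi (fun x hx => ?_)
  rw [ContinuousLinearMap.det_smulRight, ContinuousLinearMap.one_apply, one_mul,
    abs_of_nonneg (mul_nonneg hc.le (Real.rpow_nonneg (le_of_lt hx) _))]

/-- Proposition 2.3 (b): Kolmogorov-type inequality with Lorentz quasinorm, case `p < r`. -/
theorem kolmogorov_lorentz_b (n : ℕ) (d p q r : ℝ)
    (hd : 0 < d) (hdn : d ≤ n) (hq : 0 < q) (hqp : q < p)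
    (hpr : p < r) :
    ∃ C : ℝ, 0 < C ∧ ∀ f : (Fin n → ℝ) → ℝ, Measurable f →
      ∀ E : Set (Fin n → ℝ), 0 < hContent n d E → hContent n d E < ⊤ →
        hContent n d E ^ (1 / p - 1 / q) * (choquetSetLq n d q E f) ^ (1 / q) ≤
          ENNReal.ofReal (C * (q * ((r - p) / (r * (p - q))) ^ ((r - p) / r)) ^ (1 / p)) *
            lorentzNorm n d p r (E.indicator f) := by
  have hp : 0 < p := hq.trans hqp
  have hr : 0 < r := hp.trans hpr
  have hrp : 0 < r - p := by linarith
  have hpq : 0 < p - q := by linarith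
  set K : ℝ := ((r - p) / (r * (p - q))) ^ ((r - p) / r) with hKdef
  have hK : 0 < K := Real.rpow_pos_of_pos (div_pos hrp (by positivity)) _
  have hqK : 0 < q * K := mul_pos hq hK
  refine ⟨(1 + q * K) ^ (1 / q) / (q * K) ^ (1 / p), by positivity, ?_⟩
  intro f hf E hE0 hEtop
  have hCeq : ENNReal.ofReal ((1 + q * K) ^ (1 / q) / (q * K) ^ (1 / p) * (q * K) ^ (1 / p))
      = ENNReal.ofReal ((1 + q * K) ^ (1 / q)) := by
    rw [div_mul_cancel₀ _ (by positivity : (q * K) ^ (1 / p) ≠ 0)]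
  rw [hCeq]
  set H : ℝ≥0∞ := hContent n d E with hHdef
  set h : ℝ → ℝ≥0∞ := fun t => hContent n d {x | t < |E.indicator f x|} with hhdef
  have hanti : Antitone h := fun s t hst =>
    hContent_mono n d fun x hx => lt_of_le_of_lt hst hx
  have hmeas : Measurable h := hanti.measurable
  have hhle : ∀ t : ℝ, 0 ≤ t → h t ≤ H := by
    intro t ht
    refine hContent_mono n d fun x hx => ?_
    by_contra hxE
    rw [Set.mem_setOf_eq, Set.indicator_of_notMem hxE, abs_zero] at hx
    exact absurd hx (not_lt.2 ht)
  set I : ℝ≥0∞ :=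
    ∫⁻ t in Set.Ioi (0 : ℝ), ((ENNReal.ofReal t) ^ p * h t) ^ (r / p) * (ENNReal.ofReal t)⁻¹
    with hIdef
  have hLor : lorentzNorm n d p r (E.indicator f) = I ^ (1 / r) := rfl
  have hq1 : (0:ℝ) < 1 / q := by positivity
  -- rewrite the Choquet integral of |f|^q over E
  have hCho : choquetSetLq n d q E f = ∫⁻ t in Set.Ioi (0 : ℝ), h (t ^ (1 / q)) := by
    rw [choquetSetLq, choquetIntegral]
    refine setLIntegral_congr_fun measurableSet_Ioi
      (fun t ht => ?_)
    have ht' : (0:ℝ) < t := ht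
    congr 1
    ext x
    simp only [Set.mem_setOf_eq]
    by_cases hxE : x ∈ E
    · rw [Set.indicator_of_mem hxE, Set.indicator_of_mem hxE,
        ENNReal.ofReal_rpow_of_nonneg (abs_nonneg _) hq.le,
        ENNReal.ofReal_lt_ofReal_iff_of_nonneg ht'.le, one_div,
        Real.rpow_inv_lt_iff_of_pos ht'.le (abs_nonneg _) hq]
    · rw [Set.indicator_of_notMem hxE, Set.indicator_of_notMem hxE, abs_zero]
      constructor
      · intro hcon; exact absurd hcon (by simp)
      · intro hcon; exact absurd hcon (not_lt.2 (Real.rpow_nonneg ht'.le _))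
  -- head estimate
  have head : ∀ B : ℝ, 0 < B →
      (∫⁻ t in Set.Ioc (0:ℝ) B, h (t ^ (1/q))) ≤ H * ENNReal.ofReal B := by
    intro B hB
    calc (∫⁻ t in Set.Ioc (0:ℝ) B, h (t ^ (1/q)))
        ≤ ∫⁻ _ in Set.Ioc (0:ℝ) B, H :=
          setLIntegral_mono' measurableSet_Ioc fun t ht =>
            hhle _ (Real.rpow_nonneg (le_of_lt ht.1) _)
      _ = H * ENNReal.ofReal B := by
          rw [setLIntegral_const, Real.volume_Ioc, sub_zero]
  set β : ℝ := (p / r - p / q) * (r / (r - p)) with hβdef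
  have hβ1 : β + 1 = r * (q - p) / (q * (r - p)) := by
    rw [hβdef]; field_simp; ring
  have hβ : β < -1 := by
    have : β + 1 < 0 := by
      rw [hβ1]
      exact div_neg_of_neg_of_pos (by nlinarith) (by positivity)
    linarith
  have hmOf : Measurable fun t : ℝ => ENNReal.ofReal t := ENNReal.measurable_ofReal
  have hmrp : ∀ e : ℝ, Measurable fun t : ℝ => (ENNReal.ofReal t) ^ e := fun e =>
    ENNReal.continuous_rpow_const.measurable.comp hmOf
  have hmh : Measurable fun t : ℝ => h (t ^ (1/q)) :=
    hmeas.comp (Real.continuous_rpow_const hq1.le).measurable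
  have hJ : (∫⁻ t in Set.Ioi (0:ℝ),
        ((ENNReal.ofReal t) ^ (p / q) * h (t ^ (1/q))) ^ (r / p) * (ENNReal.ofReal t)⁻¹)
      = ENNReal.ofReal q * I := by
    have hsub := my_lintegral_comp_rpow hq1
      (fun y => ((ENNReal.ofReal y) ^ p * h y) ^ (r / p) * (ENNReal.ofReal y)⁻¹)
    rw [hIdef, ← hsub, ← lintegral_const_mul' (ENNReal.ofReal q) _ ENNReal.ofReal_ne_top]
    refine setLIntegral_congr_fun measurableSet_Ioi
      (fun x hx => ?_)
    have hx' : (0:ℝ) < x := hx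
    have hx0 : ENNReal.ofReal x ≠ 0 := (ENNReal.ofReal_pos.mpr hx').ne'
    have hxt : ENNReal.ofReal x ≠ ⊤ := ENNReal.ofReal_ne_top
    rw [← ENNReal.ofReal_rpow_of_pos hx',
      ENNReal.ofReal_mul (by positivity : (0:ℝ) ≤ 1/q),
      ← ENNReal.ofReal_rpow_of_pos hx',
      ← ENNReal.rpow_mul (ENNReal.ofReal x) (1/q) p,
      ← ENNReal.rpow_neg (ENNReal.ofReal x) (1/q),
      show (1/q) * p = p / q by ring]
    have e1 : ENNReal.ofReal q * ENNReal.ofReal (1/q) = 1 := by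
      rw [← ENNReal.ofReal_mul hq.le, mul_one_div_cancel hq.ne', ENNReal.ofReal_one]
    have e2 : (ENNReal.ofReal x) ^ (1/q - 1) * (ENNReal.ofReal x) ^ (-(1/q))
        = (ENNReal.ofReal x)⁻¹ := by
      rw [← ENNReal.rpow_add _ _ hx0 hxt, show 1/q - 1 + -(1/q) = (-1:ℝ) by ring,
        ENNReal.rpow_neg_one]
    trans ((ENNReal.ofReal q * ENNReal.ofReal (1/q)) *
      ((ENNReal.ofReal x) ^ (1/q - 1) * (ENNReal.ofReal x) ^ (-(1/q)))) *
      ((ENNReal.ofReal x) ^ (p / q) * h (x ^ (1/q))) ^ (r / p)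
    · rw [e1, e2, one_mul]; exact mul_comm _ _
    · ring
  -- tail estimate via Hölder
  have tail : ∀ B : ℝ, 0 < B →
      (∫⁻ t in Set.Ioi B, h (t ^ (1/q))) ≤
        (ENNReal.ofReal q * I) ^ (p / r) *
          ENNReal.ofReal ((-B ^ (β + 1) / (β + 1)) ^ ((r - p) / r)) := by
    intro B hB
    set u : ℝ → ℝ≥0∞ := fun t =>
      ((ENNReal.ofReal t) ^ (p / q) * h (t ^ (1/q))) * (ENNReal.ofReal t) ^ (-(p/r)) with hu
    set v : ℝ → ℝ≥0∞ := fun t => (ENNReal.ofReal t) ^ (p/r - p/q) with hv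
    have hmu : Measurable u := ((hmrp (p/q)).mul hmh).mul (hmrp (-(p/r)))
    have hmv : Measurable v := hmrp (p/r - p/q)
    have hconj : Real.HolderConjugate (r/p) (r/(r-p)) := by
      rw [Real.holderConjugate_iff]; constructor
      · rw [lt_div_iff₀ hp]; linarith
      · rw [inv_div, inv_div]; field_simp; ring
    have holder := ENNReal.lintegral_mul_le_Lp_mul_Lq (volume.restrict (Set.Ioi B)) hconj
      hmu.aemeasurable hmv.aemeasurable
    have hA : (∫⁻ t in Set.Ioi B, h (t ^ (1/q))) = ∫⁻ t in Set.Ioi B, (u * v) t := by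
      refine setLIntegral_congr_fun measurableSet_Ioi
        (fun t ht => ?_)
      have ht' : (0:ℝ) < t := hB.trans ht
      have h0 : ENNReal.ofReal t ≠ 0 := (ENNReal.ofReal_pos.mpr ht').ne'
      have hT : ENNReal.ofReal t ≠ ⊤ := ENNReal.ofReal_ne_top
      simp only [hu, hv, Pi.mul_apply]
      rw [mul_assoc, ← ENNReal.rpow_add _ _ h0 hT,
        show -(p/r) + (p/r - p/q) = -(p/q) by ring, ENNReal.rpow_neg,
        mul_comm ((ENNReal.ofReal t) ^ (p/q)), mul_assoc,
        ENNReal.mul_inv_cancel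
          (ENNReal.rpow_pos (ENNReal.ofReal_pos.mpr ht') hT).ne'
          (ENNReal.rpow_lt_top_of_nonneg (by positivity) hT).ne,
        mul_one]
    have hB1 : (∫⁻ t in Set.Ioi B, u t ^ (r/p)) ≤ ENNReal.ofReal q * I := by
      rw [← hJ]
      refine le_trans (lintegral_mono_set (Set.Ioi_subset_Ioi hB.le)) (le_of_eq ?_)
      refine setLIntegral_congr_fun measurableSet_Ioi
        (fun t ht => ?_)
      simp only [hu]
      rw [ENNReal.mul_rpow_of_nonneg _ _ (by positivity : (0:ℝ) ≤ r/p),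
        ← ENNReal.rpow_mul (ENNReal.ofReal t) (-(p/r)) (r/p),
        show -(p/r) * (r/p) = -1 by field_simp, ENNReal.rpow_neg_one]
    have hXpos : 0 < -B ^ (β+1) / (β+1) :=
      div_pos_iff.mpr (Or.inr
        ⟨neg_lt_zero.mpr (Real.rpow_pos_of_pos hB _), by linarith⟩)
    have hC : (∫⁻ t in Set.Ioi B, v t ^ (r/(r-p)))
        = ENNReal.ofReal (-B ^ (β+1) / (β+1)) := by
      have hvpt : (∫⁻ t in Set.Ioi B, v t ^ (r/(r-p)))
          = ∫⁻ t in Set.Ioi B, ENNReal.ofReal (t ^ β) := by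
        refine setLIntegral_congr_fun measurableSet_Ioi
          (fun t ht => ?_)
        have ht' : (0:ℝ) < t := hB.trans ht
        simp only [hv]
        rw [← ENNReal.rpow_mul, ← hβdef, ENNReal.ofReal_rpow_of_pos ht']
      rw [hvpt, ← ofReal_integral_eq_lintegral_ofReal (integrableOn_Ioi_rpow_of_lt hβ hB)
          ((ae_restrict_iff' measurableSet_Ioi).mpr (Filter.Eventually.of_forall
            fun t ht => Real.rpow_nonneg (hB.trans ht).le _)),
        integral_Ioi_rpow_of_lt hβ hB]
    calc (∫⁻ t in Set.Ioi B, h (t ^ (1/q)))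
        = ∫⁻ t in Set.Ioi B, (u * v) t := hA
      _ ≤ (∫⁻ t in Set.Ioi B, u t ^ (r/p)) ^ (1/(r/p)) *
          (∫⁻ t in Set.Ioi B, v t ^ (r/(r-p))) ^ (1/(r/(r-p))) := holder
      _ ≤ (ENNReal.ofReal q * I) ^ (p/r) *
          ENNReal.ofReal ((-B ^ (β+1) / (β+1)) ^ ((r-p)/r)) := by
          rw [one_div_div, one_div_div, hC, ENNReal.ofReal_rpow_of_pos hXpos]
          exact mul_le_mul_left (ENNReal.rpow_le_rpow hB1 (by positivity)) _
  have total : ∀ B : ℝ, 0 < B →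
      choquetSetLq n d q E f ≤
        H * ENNReal.ofReal B + (ENNReal.ofReal q * I) ^ (p / r) *
          ENNReal.ofReal ((-B ^ (β + 1) / (β + 1)) ^ ((r - p) / r)) := by
    intro B hB
    rw [hCho, show Set.Ioi (0:ℝ) = Set.Ioc 0 B ∪ Set.Ioi B from
        (Set.Ioc_union_Ioi_eq_Ioi hB.le).symm,
      lintegral_union measurableSet_Ioi (Set.Ioc_disjoint_Ioi le_rfl)]
    exact add_le_add (head B hB) (tail B hB)
  rw [hLor]
  by_cases hItop : I = ⊤
  · rw [hItop, ENNReal.top_rpow_of_pos (by positivity), ENNReal.mul_top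
      (ENNReal.ofReal_pos.mpr (by positivity)).ne']
    exact le_top
  by_cases hI0 : I = 0
  · have hTot0 : choquetSetLq n d q E f = 0 := by
      refine le_antisymm ?_ zero_le
      refine ENNReal.le_of_forall_pos_le_add fun ε hε _ => ?_
      have hH0 : (0:ℝ) ≤ H.toReal := ENNReal.toReal_nonneg
      have hB : 0 < (ε:ℝ) / (H.toReal + 1) := by positivity
      have h1 := total _ hB
      rw [hI0, mul_zero, ENNReal.zero_rpow_of_pos (by positivity), zero_mul, add_zero] at h1
      refine h1.trans ?_
      rw [zero_add]
      calc H * ENNReal.ofReal ((ε:ℝ) / (H.toReal + 1))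
          = ENNReal.ofReal (H.toReal * ((ε:ℝ) / (H.toReal + 1))) := by
            rw [ENNReal.ofReal_mul hH0, ENNReal.ofReal_toReal hEtop.ne]
        _ ≤ ENNReal.ofReal (ε:ℝ) := by
            refine ENNReal.ofReal_le_ofReal ?_
            rw [mul_div_assoc'] at *
            rw [div_le_iff₀ (by positivity)]
            nlinarith [ε.coe_nonneg]
        _ = (ε : ℝ≥0∞) := ENNReal.ofReal_coe_nnreal
    rw [hTot0, ENNReal.zero_rpow_of_pos hq1, mul_zero]
    exact zero_le
  -- main case : 0 < I < ⊤
  have hIpos : 0 < I.toReal := ENNReal.toReal_pos hI0 hItop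
  set N₀ : ℝ := I.toReal ^ (1/r) with hN0
  have hN₀ : 0 < N₀ := Real.rpow_pos_of_pos hIpos _
  have hH0 : 0 < H.toReal := ENNReal.toReal_pos hE0.ne' hEtop.ne
  set H₀ : ℝ := H.toReal with hH0def
  set B : ℝ := N₀ ^ q * H₀ ^ (-(q / p)) with hBdef
  have hBpos : 0 < B := by positivity
  have hIof : I = ENNReal.ofReal (N₀ ^ r) := by
    rw [hN0, ← Real.rpow_mul (ENNReal.toReal_nonneg), one_div,
      inv_mul_cancel₀ hr.ne', Real.rpow_one, ENNReal.ofReal_toReal hItop]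
  have hstep : H * ENNReal.ofReal B + (ENNReal.ofReal q * I) ^ (p / r) *
        ENNReal.ofReal ((-B ^ (β + 1) / (β + 1)) ^ ((r - p) / r))
      = ENNReal.ofReal ((1 + q * K) * (N₀ ^ q * H₀ ^ (1 - q / p))) := by
    have hHof : H = ENNReal.ofReal H₀ := (ENNReal.ofReal_toReal hEtop.ne).symm
    have hXpos2 : 0 < -B ^ (β+1) / (β+1) :=
      div_pos_iff.mpr (Or.inr
        ⟨neg_lt_zero.mpr (Real.rpow_pos_of_pos hBpos _), by linarith⟩)
    have hqp' : q - p ≠ 0 := sub_ne_zero.mpr (ne_of_lt hqp)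
    have e1 : H₀ * B = N₀ ^ q * H₀ ^ (1 - q/p) := by
      rw [hBdef, show (1 : ℝ) - q/p = 1 + -(q/p) by ring, Real.rpow_add hH0, Real.rpow_one]
      ring
    have f1 : q ^ (p/r) * q ^ ((r-p)/r) = q := by
      rw [← Real.rpow_add hq, show p/r + (r-p)/r = 1 by field_simp; ring, Real.rpow_one]
    have f2 : N₀ ^ p * N₀ ^ (q-p) = N₀ ^ q := by
      rw [← Real.rpow_add hN₀, show p + (q-p) = q by ring]
    have c1 : (q * N₀ ^ r) ^ (p/r) = q ^ (p/r) * N₀ ^ p := by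
      rw [Real.mul_rpow hq.le (by positivity), ← Real.rpow_mul hN₀.le,
        show r * (p/r) = p by field_simp]
    have c2 : -B ^ (β+1) / (β+1) = B ^ (β+1) * (q * ((r-p) / (r * (p-q)))) := by
      rw [hβ1]
      field_simp
      ring
    have c4 : (β+1) * ((r-p)/r) = (q-p)/q := by
      rw [hβ1]; field_simp
    have c5 : B ^ ((q-p)/q) = N₀ ^ (q-p) * H₀ ^ (1 - q/p) := by
      rw [hBdef, Real.mul_rpow (by positivity) (by positivity),
        ← Real.rpow_mul hN₀.le, ← Real.rpow_mul hH0.le,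
        show q * ((q-p)/q) = q - p by field_simp,
        show -(q/p) * ((q-p)/q) = 1 - q/p by field_simp; ring]
    have c3 : (-B ^ (β+1) / (β+1)) ^ ((r-p)/r)
        = N₀ ^ (q-p) * H₀ ^ (1 - q/p) * (q ^ ((r-p)/r) * K) := by
      rw [c2, Real.mul_rpow (Real.rpow_nonneg hBpos.le _) (by positivity),
        ← Real.rpow_mul hBpos.le, c4, c5,
        Real.mul_rpow hq.le (by positivity), ← hKdef]
    have e2 : (q * N₀ ^ r) ^ (p/r) * (-B ^ (β+1) / (β+1)) ^ ((r-p)/r)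
        = q * K * (N₀ ^ q * H₀ ^ (1 - q/p)) := by
      rw [c1, c3]
      trans (q ^ (p/r) * q ^ ((r-p)/r)) * (N₀ ^ p * N₀ ^ (q-p)) * (H₀ ^ (1 - q/p) * K)
      · ring
      · rw [f1, f2]; ring
    rw [hHof, hIof, ← ENNReal.ofReal_mul hq.le,
      ENNReal.ofReal_rpow_of_pos (by positivity),
      ← ENNReal.ofReal_mul hH0.le,
      ← ENNReal.ofReal_mul (by positivity),
      ← ENNReal.ofReal_add (by positivity)
        (mul_nonneg (by positivity) (Real.rpow_nonneg hXpos2.le _))]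
    congr 1
    rw [e1, e2]; ring
  have key := (total B hBpos).trans_eq hstep
  have hfinal : H ^ (1 / p - 1 / q) *
      (ENNReal.ofReal ((1 + q * K) * (N₀ ^ q * H₀ ^ (1 - q / p)))) ^ (1 / q)
      = ENNReal.ofReal ((1 + q * K) ^ (1 / q)) * I ^ (1 / r) := by
    have hHof : H = ENNReal.ofReal H₀ := (ENNReal.ofReal_toReal hEtop.ne).symm
    rw [hHof, hIof, ENNReal.ofReal_rpow_of_pos hH0,
      ENNReal.ofReal_rpow_of_pos (by positivity),
      ENNReal.ofReal_rpow_of_pos (by positivity),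
      ← ENNReal.ofReal_mul (by positivity),
      ← ENNReal.ofReal_mul (by positivity)]
    congr 1
    have f3 : (N₀ ^ r) ^ ((1:ℝ)/r) = N₀ := by
      rw [← Real.rpow_mul hN₀.le, mul_one_div_cancel hr.ne', Real.rpow_one]
    rw [f3, Real.mul_rpow (by positivity) (by positivity),
      Real.mul_rpow (by positivity) (by positivity),
      ← Real.rpow_mul hN₀.le, ← Real.rpow_mul hH0.le,
      show q * (1/q) = 1 by field_simp, Real.rpow_one]
    have f4 : H₀ ^ ((1:ℝ)/p - 1/q) * H₀ ^ ((1 - q/p) * (1/q)) = 1 := by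
      rw [← Real.rpow_add hH0,
        show (1:ℝ)/p - 1/q + (1 - q/p) * (1/q) = 0 by field_simp; ring,
        Real.rpow_zero]
    trans (H₀ ^ ((1:ℝ)/p - 1/q) * H₀ ^ ((1 - q/p) * (1/q))) * ((1 + q*K) ^ (1/q) * N₀)
    · ring
    · rw [f4, one_mul]
  calc H ^ (1 / p - 1 / q) * choquetSetLq n d q E f ^ (1 / q)
      ≤ H ^ (1 / p - 1 / q) *
        (ENNReal.ofReal ((1 + q * K) * (N₀ ^ q * H₀ ^ (1 - q / p)))) ^ (1 / q) :=
        mul_le_mul_right (ENNReal.rpow_le_rpow key (by positivity)) _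
    _ = ENNReal.ofReal ((1 + q * K) ^ (1 / q)) * I ^ (1 / r) := hfinal

end
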